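/- If Y = [[1, dᵀ],[d, X]] is positive semidefinite with X symmetric having all entries in {0,1} and d = diag(X), then d_j = X_{jj} for all j and Y = y yᵀ for the {0,1}-vector y = (1, d); in particular Y has rank one. -/

import Mathlib

/-- The bordered matrix `[[1, dᵀ], [d, X]]`. -/
def borderMat' (n : ℕ) (d : Fin n → ℝ) (X : Matrix (Fin n) (Fin n) ℝ) :
    Matrix (Fin 1 ⊕ Fin n) (Fin 1 ⊕ Fin n) ℝ :=
  Matrix.fromBlocks (fun _ _ => 1) (fun _ j => d j) (fun i _ => d i) X

theorem stmt_6 (n : ℕ) (X : Matrix (Fin n) (Fin n) ℝ) (hsymm : X.IsSymm)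
    (hX01 : ∀ i j, X i j = 0 ∨ X i j = 1) (d : Fin n → ℝ) (hd : d = fun i => X i i)
    (hY : (borderMat' n d X).PosSemidef) :
    (∀ j, d j = X j j) ∧
      borderMat' n d X =
        Matrix.vecMulVec (Sum.elim (fun _ => (1 : ℝ)) d) (Sum.elim (fun _ => (1 : ℝ)) d) ∧
      (borderMat' n d X).rank = 1 := by
  subst hd
  have hsym' : ∀ i j, X j i = X i j := fun i j => hsymm.apply i j
  -- zero diagonal forces zero row
  have hzero : ∀ i j : Fin n, X i i = 0 → X i j = 0 := by
    intro i j hi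
    by_cases hij : i = j
    · subst hij; exact hi
    rcases hX01 i j with h | h
    · exact h
    exfalso
    have hps := (hY.submatrix (![Sum.inr i, Sum.inr j] : Fin 2 → Fin 1 ⊕ Fin n)).dotProduct_mulVec_nonneg ![-1, 1]
    have hjj : X j j ≤ 1 := by rcases hX01 j j with h' | h' <;> rw [h'] <;> norm_num
    simp only [dotProduct, Matrix.mulVec, Fin.sum_univ_two, Matrix.submatrix_apply,
      borderMat', Matrix.fromBlocks, Matrix.of_apply, Sum.elim_inr, Matrix.cons_val_zero, Matrix.cons_val_one,
      Matrix.head_cons, RCLike.star_def, Pi.star_apply, star_trivial] at hps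
    rw [hsym' i j] at hps
    nlinarith [hps]
  have key : ∀ i j : Fin n, X i j = X i i * X j j := by
    intro i j
    rcases hX01 i i with hi | hi
    · rw [hzero i j hi, hi]; ring
    rcases hX01 j j with hj | hj
    · rw [← hsym' i j, hzero j i hj, hj]; ring
    rw [hi, hj, one_mul]
    by_cases hij : i = j
    · subst hij; exact hi
    rcases hX01 i j with h | h
    · exfalso
      have hps := (hY.submatrix (![Sum.inl 0, Sum.inr i, Sum.inr j] :
        Fin 3 → Fin 1 ⊕ Fin n)).dotProduct_mulVec_nonneg ![-1, 1, 1]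
      simp only [dotProduct, Matrix.mulVec, Fin.sum_univ_three, Matrix.submatrix_apply,
        borderMat', Matrix.fromBlocks, Matrix.of_apply, Sum.elim_inl, Sum.elim_inr, Matrix.fromBlocks_apply₁₁, Matrix.fromBlocks_apply₁₂,
        Matrix.fromBlocks_apply₂₁, Matrix.fromBlocks_apply₂₂, Matrix.cons_val_zero,
        Matrix.cons_val_one, Matrix.head_cons, Matrix.cons_val_two, Matrix.tail_cons,
        RCLike.star_def, Pi.star_apply, star_trivial] at hps
      rw [hsym' i j] at hps
      nlinarith [hps]
    · exact h
  have heq : borderMat' n (fun i => X i i) X =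
      Matrix.vecMulVec (Sum.elim (fun _ => (1 : ℝ)) (fun i => X i i))
        (Sum.elim (fun _ => (1 : ℝ)) (fun i => X i i)) := by
    ext (i | i) (j | j)
    · simp [borderMat', Matrix.fromBlocks, Matrix.vecMulVec]
    · simp [borderMat', Matrix.fromBlocks, Matrix.vecMulVec]
    · simp [borderMat', Matrix.fromBlocks, Matrix.vecMulVec]
    · simpa [borderMat', Matrix.fromBlocks, Matrix.vecMulVec] using key i j
  refine ⟨fun j => rfl, heq, ?_⟩
  have hle : (borderMat' n (fun i => X i i) X).rank ≤ 1 := by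
    rw [heq, Matrix.vecMulVec_eq (Fin 1)]
    calc (Matrix.replicateCol (Fin 1) (Sum.elim (fun _ => (1:ℝ)) fun i => X i i) *
          Matrix.replicateRow (Fin 1) (Sum.elim (fun _ => (1:ℝ)) fun i => X i i)).rank
        ≤ (Matrix.replicateCol (Fin 1) (Sum.elim (fun _ => (1:ℝ)) fun i => X i i)).rank :=
          Matrix.rank_mul_le_left _ _
      _ ≤ Fintype.card (Fin 1) := Matrix.rank_le_card_width _
      _ = 1 := by simp
  have hpos : 0 < (borderMat' n (fun i => X i i) X).rank := by
    rw [Matrix.rank, Module.finrank_pos_iff_exists_ne_zero]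
    refine ⟨⟨(borderMat' n (fun i => X i i) X).mulVecLin (Pi.single (Sum.inl 0) 1),
      LinearMap.mem_range_self _ _⟩, ?_⟩
    simp only [ne_eq, Submodule.mk_eq_zero]
    intro hcontra
    have h1 := congrFun hcontra (Sum.inl 0)
    simp [Matrix.mulVecLin_apply, Matrix.mulVec_single, borderMat', Matrix.fromBlocks] at h1
  omega
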